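/- For all real x with 0 ≤ x ≤ 1, one has 2¹⁸·(f((1+x)/64) − f((1−x)/64)) = (19/2025)x + (2/27)x³ + (1/15)x⁵. -/

import Mathlib

open scoped BigOperators

private lemma fab_deriv (f : ℝ → ℝ) (hcont : ContinuousOn f (Set.Ici 0))
    (hint : ∀ x : ℝ, 0 ≤ x → f x = ∫ t in (0:ℝ)..(2 * x), f t) :
    ∀ y : ℝ, 0 < y → HasDerivAt f (2 * f (2 * y)) y := by
  intro y hy
  have h2y : (0:ℝ) < 2 * y := by linarith
  have hcy : ContinuousAt f (2 * y) := hcont.continuousAt (Ici_mem_nhds h2y)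
  have hIoi : ContinuousOn f (Set.Ioi 0) := hcont.mono Set.Ioi_subset_Ici_self
  have hmeas : StronglyMeasurableAtFilter f (nhds (2 * y)) MeasureTheory.volume :=
    hIoi.stronglyMeasurableAtFilter isOpen_Ioi (2 * y) h2y
  have hInt : IntervalIntegrable f MeasureTheory.volume 0 (2 * y) := by
    apply ContinuousOn.intervalIntegrable
    apply hcont.mono
    rw [Set.uIcc_of_le h2y.le]
    exact fun t ht => ht.1
  have hF : HasDerivAt (fun u => ∫ t in (0:ℝ)..u, f t) (f (2 * y)) (2 * y) :=
    intervalIntegral.integral_hasDerivAt_right hInt hmeas hcy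
  have hinner : HasDerivAt (fun x : ℝ => 2 * x) 2 y := by
    simpa using (hasDerivAt_id y).const_mul 2
  have hG : HasDerivAt (fun x : ℝ => ∫ t in (0:ℝ)..(2 * x), f t) (2 * f (2 * y)) y := by
    have h := hF.comp y hinner
    simp only [Function.comp_def] at h
    refine h.congr_deriv ?_
    ring
  apply hG.congr_of_eventuallyEq
  filter_upwards [eventually_gt_nhds hy] with z hz
  exact hint z hz.le

private lemma fab_dplus (f : ℝ → ℝ)
    (hf : ∀ y : ℝ, 0 < y → HasDerivAt f (2 * f (2 * y)) y)
    (c c2 : ℝ) (hc : 0 < c) (hcc : c = 2 * c2) (x : ℝ) (hx : 0 < 1 + x) :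
    HasDerivAt (fun x => f ((1 + x) / c)) (2 / c * f ((1 + x) / c2)) x := by
  have hc2 : (0:ℝ) < c2 := by linarith
  have h1 : HasDerivAt (fun x : ℝ => (1 + x) / c) (1 / c) x := by
    simpa using ((hasDerivAt_id x).const_add 1).div_const c
  have h2 := (hf ((1 + x) / c) (div_pos hx hc)).comp x h1
  simp only [Function.comp_def] at h2
  have h3 : 2 * ((1 + x) / c) = (1 + x) / c2 := by
    rw [hcc]; field_simp
  rw [h3] at h2
  refine h2.congr_deriv ?_
  ring

private lemma fab_dminus (f : ℝ → ℝ)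
    (hf : ∀ y : ℝ, 0 < y → HasDerivAt f (2 * f (2 * y)) y)
    (c c2 : ℝ) (hc : 0 < c) (hcc : c = 2 * c2) (x : ℝ) (hx : 0 < 1 - x) :
    HasDerivAt (fun x => f ((1 - x) / c)) (-(2 / c) * f ((1 - x) / c2)) x := by
  have hc2 : (0:ℝ) < c2 := by linarith
  have h1 : HasDerivAt (fun x : ℝ => (1 - x) / c) (-1 / c) x := by
    simpa using ((hasDerivAt_id x).const_sub 1).div_const c
  have h2 := (hf ((1 - x) / c) (div_pos hx hc)).comp x h1
  simp only [Function.comp_def] at h2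
  have h3 : 2 * ((1 - x) / c) = (1 - x) / c2 := by
    rw [hcc]; field_simp
  rw [h3] at h2
  refine h2.congr_deriv ?_
  ring

private lemma fab_contP (f : ℝ → ℝ) (hcont : ContinuousOn f (Set.Ici 0))
    (c : ℝ) (hc : 0 < c) :
    ContinuousOn (fun x : ℝ => f ((1 + x) / c)) (Set.Icc (0:ℝ) 1) := by
  apply hcont.comp ((continuous_const.add continuous_id).div_const c).continuousOn
  intro x hx
  have : (0:ℝ) ≤ (1 + x) / c := div_nonneg (by linarith [hx.1]) hc.le
  exact this

private lemma fab_contM (f : ℝ → ℝ) (hcont : ContinuousOn f (Set.Ici 0))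
    (c : ℝ) (hc : 0 < c) :
    ContinuousOn (fun x : ℝ => f ((1 - x) / c)) (Set.Icc (0:ℝ) 1) := by
  apply hcont.comp ((continuous_const.sub continuous_id).div_const c).continuousOn
  intro x hx
  have : (0:ℝ) ≤ (1 - x) / c := div_nonneg (by linarith [hx.2]) hc.le
  exact this

theorem fabius_stmt_5 (f : ℝ → ℝ)
    (hcont : ContinuousOn f (Set.Ici 0))
    (hsym : ∀ x : ℝ, 0 ≤ x → x ≤ 1 → f x + f (1 - x) = 1)
    (hint : ∀ x : ℝ, 0 ≤ x → f x = ∫ t in (0:ℝ)..(2 * x), f t) :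
    ∀ x : ℝ, 0 ≤ x → x ≤ 1 →
      2 ^ 18 * (f ((1 + x) / 64) - f ((1 - x) / 64)) = (19 / 2025) * x + (2 / 27) * x ^ 3 + (1 / 15) * x ^ 5 := by
  have hf0 : f 0 = 0 := by simpa using hint 0 le_rfl
  have hf := fab_deriv f hcont hint
  -- level 1 sum
  have hS1 : ∀ x ∈ Set.Icc (0:ℝ) 1, f ((1 + x) / 2) + f ((1 - x) / 2) = 1 := by
    intro x hx
    have h := hsym ((1 + x) / 2) (by linarith [hx.1]) (by linarith [hx.2])
    have e : 1 - (1 + x) / 2 = (1 - x) / 2 := by ring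
    rwa [e] at h
  -- level 2 difference
  have hD2 : ∀ x ∈ Set.Icc (0:ℝ) 1, f ((1 + x) / 4) - f ((1 - x) / 4) = x / 2 := by
    intro x hx
    refine eq_of_has_deriv_right_eq (a := 0) (b := 1)
      (f := fun x => f ((1 + x) / 4) - f ((1 - x) / 4)) (g := fun x : ℝ => x / 2)
      (f' := fun x => (1/2) * (f ((1 + x) / 2) + f ((1 - x) / 2)))
      (fun y hy => ?_) (fun y hy => ?_) ?_ ?_ ?_ x hx
    · have h1 := fab_dplus f hf 4 2 (by norm_num) (by norm_num) y (by linarith [hy.1])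
      have h2 := fab_dminus f hf 4 2 (by norm_num) (by norm_num) y (by linarith [hy.2])
      refine HasDerivAt.hasDerivWithinAt ?_
      refine (h1.sub h2).congr_deriv ?_
      ring
    · refine HasDerivAt.hasDerivWithinAt ?_
      beta_reduce
      rw [hS1 y ⟨hy.1, hy.2.le⟩, mul_one]
      simpa using (hasDerivAt_id y).div_const 2
    · exact (fab_contP f hcont 4 (by norm_num)).sub (fab_contM f hcont 4 (by norm_num))
    · exact (continuous_id.div_const 2).continuousOn
    · norm_num
  -- level 3 sum
  have hS3 : ∀ x ∈ Set.Icc (0:ℝ) 1,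
      f ((1 + x) / 8) + f ((1 - x) / 8) = 2 * f (1/8) + x ^ 2 / 16 := by
    intro x hx
    refine eq_of_has_deriv_right_eq (a := 0) (b := 1)
      (f := fun x => f ((1 + x) / 8) + f ((1 - x) / 8))
      (g := fun x : ℝ => 2 * f (1/8) + x ^ 2 / 16)
      (f' := fun x => (1/4) * (f ((1 + x) / 4) - f ((1 - x) / 4)))
      (fun y hy => ?_) (fun y hy => ?_) ?_ ?_ ?_ x hx
    · have h1 := fab_dplus f hf 8 4 (by norm_num) (by norm_num) y (by linarith [hy.1])
      have h2 := fab_dminus f hf 8 4 (by norm_num) (by norm_num) y (by linarith [hy.2])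
      refine HasDerivAt.hasDerivWithinAt ?_
      refine (h1.add h2).congr_deriv ?_
      ring
    · refine HasDerivAt.hasDerivWithinAt ?_
      beta_reduce
      rw [hD2 y ⟨hy.1, hy.2.le⟩]
      have h := ((hasDerivAt_pow 2 y).div_const 16).const_add (2 * f (1/8))
      refine h.congr_deriv ?_
      push_cast
      ring
    · exact (fab_contP f hcont 8 (by norm_num)).add (fab_contM f hcont 8 (by norm_num))
    · exact (continuous_const.add ((continuous_id.pow 2).div_const 16)).continuousOn
    · norm_num [two_mul]
  -- level 4 difference
  have hD4 : ∀ x ∈ Set.Icc (0:ℝ) 1,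
      f ((1 + x) / 16) - f ((1 - x) / 16) = f (1/8) * x / 4 + x ^ 3 / 384 := by
    intro x hx
    refine eq_of_has_deriv_right_eq (a := 0) (b := 1)
      (f := fun x => f ((1 + x) / 16) - f ((1 - x) / 16))
      (g := fun x : ℝ => f (1/8) * x / 4 + x ^ 3 / 384)
      (f' := fun x => (1/8) * (f ((1 + x) / 8) + f ((1 - x) / 8)))
      (fun y hy => ?_) (fun y hy => ?_) ?_ ?_ ?_ x hx
    · have h1 := fab_dplus f hf 16 8 (by norm_num) (by norm_num) y (by linarith [hy.1])
      have h2 := fab_dminus f hf 16 8 (by norm_num) (by norm_num) y (by linarith [hy.2])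
      refine HasDerivAt.hasDerivWithinAt ?_
      refine (h1.sub h2).congr_deriv ?_
      ring
    · refine HasDerivAt.hasDerivWithinAt ?_
      beta_reduce
      rw [hS3 y ⟨hy.1, hy.2.le⟩]
      have h := (((hasDerivAt_id' (x := y)).const_mul (f (1/8))).div_const 4).add
        ((hasDerivAt_pow 3 y).div_const 384)
      refine h.congr_deriv ?_
      push_cast
      ring
    · exact (fab_contP f hcont 16 (by norm_num)).sub (fab_contM f hcont 16 (by norm_num))
    · exact (((continuous_const.mul continuous_id).div_const 4).add
        ((continuous_id.pow 3).div_const 384)).continuousOn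
    · norm_num
  -- level 5 sum
  have hS5 : ∀ x ∈ Set.Icc (0:ℝ) 1,
      f ((1 + x) / 32) + f ((1 - x) / 32)
        = 2 * f (1/32) + f (1/8) * x ^ 2 / 128 + x ^ 4 / 24576 := by
    intro x hx
    refine eq_of_has_deriv_right_eq (a := 0) (b := 1)
      (f := fun x => f ((1 + x) / 32) + f ((1 - x) / 32))
      (g := fun x : ℝ => 2 * f (1/32) + f (1/8) * x ^ 2 / 128 + x ^ 4 / 24576)
      (f' := fun x => (1/16) * (f ((1 + x) / 16) - f ((1 - x) / 16)))
      (fun y hy => ?_) (fun y hy => ?_) ?_ ?_ ?_ x hx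
    · have h1 := fab_dplus f hf 32 16 (by norm_num) (by norm_num) y (by linarith [hy.1])
      have h2 := fab_dminus f hf 32 16 (by norm_num) (by norm_num) y (by linarith [hy.2])
      refine HasDerivAt.hasDerivWithinAt ?_
      refine (h1.add h2).congr_deriv ?_
      ring
    · refine HasDerivAt.hasDerivWithinAt ?_
      beta_reduce
      rw [hD4 y ⟨hy.1, hy.2.le⟩]
      have h := ((((hasDerivAt_pow 2 y).const_mul (f (1/8))).div_const 128).const_add
        (2 * f (1/32))).add ((hasDerivAt_pow 4 y).div_const 24576)
      refine h.congr_deriv ?_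
      push_cast
      ring
    · exact (fab_contP f hcont 32 (by norm_num)).add (fab_contM f hcont 32 (by norm_num))
    · exact ((continuous_const.add
        ((continuous_const.mul (continuous_id.pow 2)).div_const 128)).add
        ((continuous_id.pow 4).div_const 24576)).continuousOn
    · norm_num [two_mul]
  -- level 6 difference
  have hD6 : ∀ x ∈ Set.Icc (0:ℝ) 1,
      f ((1 + x) / 64) - f ((1 - x) / 64)
        = f (1/32) * x / 16 + f (1/8) * x ^ 3 / 12288 + x ^ 5 / 3932160 := by
    intro x hx
    refine eq_of_has_deriv_right_eq (a := 0) (b := 1)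
      (f := fun x => f ((1 + x) / 64) - f ((1 - x) / 64))
      (g := fun x : ℝ => f (1/32) * x / 16 + f (1/8) * x ^ 3 / 12288 + x ^ 5 / 3932160)
      (f' := fun x => (1/32) * (f ((1 + x) / 32) + f ((1 - x) / 32)))
      (fun y hy => ?_) (fun y hy => ?_) ?_ ?_ ?_ x hx
    · have h1 := fab_dplus f hf 64 32 (by norm_num) (by norm_num) y (by linarith [hy.1])
      have h2 := fab_dminus f hf 64 32 (by norm_num) (by norm_num) y (by linarith [hy.2])
      refine HasDerivAt.hasDerivWithinAt ?_
      refine (h1.sub h2).congr_deriv ?_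
      ring
    · refine HasDerivAt.hasDerivWithinAt ?_
      beta_reduce
      rw [hS5 y ⟨hy.1, hy.2.le⟩]
      have h := (((((hasDerivAt_id' (x := y)).const_mul (f (1/32))).div_const 16).add
        (((hasDerivAt_pow 3 y).const_mul (f (1/8))).div_const 12288)).add
        ((hasDerivAt_pow 5 y).div_const 3932160))
      refine h.congr_deriv ?_
      push_cast
      ring
    · exact (fab_contP f hcont 64 (by norm_num)).sub (fab_contM f hcont 64 (by norm_num))
    · exact ((((continuous_const.mul continuous_id).div_const 16).add
        ((continuous_const.mul (continuous_id.pow 3)).div_const 12288)).add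
        ((continuous_id.pow 5).div_const 3932160)).continuousOn
    · norm_num
  -- determine the constants
  have h41 := hD4 1 (by norm_num)
  have e1 : ((1:ℝ) + 1) / 16 = 1/8 := by norm_num
  have e2 : ((1:ℝ) - 1) / 16 = 0 := by norm_num
  rw [e1, e2, hf0] at h41
  have hF3 : f (1/8) = 1/288 := by norm_num at h41; linarith
  have h61 := hD6 1 (by norm_num)
  have e3 : ((1:ℝ) + 1) / 64 = 1/32 := by norm_num
  have e4 : ((1:ℝ) - 1) / 64 = 0 := by norm_num
  rw [e3, e4, hf0, hF3] at h61
  have hF5 : f (1/32) = 19 / 33177600 := by norm_num at h61; linarith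
  intro x hx0 hx1
  rw [hD6 x ⟨hx0, hx1⟩, hF3, hF5]
  ring
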